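/- (Hardy inequality, k > 1) Let k > 1 be a real number and let g ∈ C¹((0,1]) satisfy ∫₀¹ s^k (g(s)² + g'(s)²) ds < ∞. Then there exists a constant C depending only on k such that ∫₀¹ s^{k-2} g(s)² ds ≤ C ∫₀¹ s^k (g(s)² + g'(s)²) ds. -/

import Mathlib

open Set MeasureTheory

set_option maxHeartbeats 1000000 in
/-- **Hardy inequality, `k > 1`.** Let `k > 1` and let `g ∈ C¹((0,1])`
satisfy `∫₀¹ s^k (g² + g'²) ds < ∞`. Then there is a constant `C` depending only on `k`
such that `∫₀¹ s^{k-2} g² ds ≤ C ∫₀¹ s^k (g² + g'²) ds`. -/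
theorem hardy_inequality_k_gt_one (k : ℝ) (hk : 1 < k) :
    ∃ C : ℝ, 0 < C ∧
      ∀ g dg : ℝ → ℝ,
        (∀ s ∈ Ioc (0 : ℝ) 1, HasDerivAt g (dg s) s) →
        ContinuousOn dg (Ioc (0 : ℝ) 1) →
        IntegrableOn (fun s => s ^ k * (g s ^ 2 + dg s ^ 2)) (Ioc (0 : ℝ) 1) →
        ∫⁻ s in Ioc (0 : ℝ) 1, ENNReal.ofReal (s ^ (k - 2) * g s ^ 2) ≤
          ENNReal.ofReal C *
            ∫⁻ s in Ioc (0 : ℝ) 1, ENNReal.ofReal (s ^ k * (g s ^ 2 + dg s ^ 2)) := by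
  have hk1 : (0:ℝ) < k - 1 := by linarith
  have h2k : (0:ℝ) < (2:ℝ) ^ k := Real.rpow_pos_of_pos two_pos k
  set C : ℝ := 2 / (k-1) * (3 * 2 ^ k) + 4 / (k-1)^2 with hC
  have hCpos : 0 < C := by positivity
  refine ⟨C, hCpos, ?_⟩
  intro g dg hg hdg hint
  have hgc : ContinuousOn g (Ioc 0 1) :=
    fun s hs => (hg s hs).continuousAt.continuousWithinAt
  set I : ℝ := ∫ s in Ioc (0:ℝ) 1, s ^ k * (g s ^ 2 + dg s ^ 2) with hIdef
  have hnnae : 0 ≤ᵐ[volume.restrict (Ioc (0:ℝ) 1)] fun s => s ^ k * (g s ^ 2 + dg s ^ 2) := by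
    filter_upwards [ae_restrict_mem measurableSet_Ioc] with s hs
    have : (0:ℝ) ≤ s ^ k := Real.rpow_nonneg hs.1.le k
    positivity
  have hRHS : ∫⁻ s in Ioc (0:ℝ) 1, ENNReal.ofReal (s ^ k * (g s ^ 2 + dg s ^ 2)) =
      ENNReal.ofReal I := (ofReal_integral_eq_lintegral_ofReal hint hnnae).symm
  have hI0 : 0 ≤ I := integral_nonneg_of_ae hnnae
  have hmem : ∀ s : ℝ, s ∈ Icc (1/2 : ℝ) 1 → s ∈ Ioc (0:ℝ) 1 :=
    fun s hs => ⟨lt_of_lt_of_le (by norm_num) hs.1, hs.2⟩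
  set J : ℝ := ∫ s in (1/2 : ℝ)..1, (g s ^ 2 + dg s ^ 2) with hJdef
  have hgIcc : ContinuousOn g (Icc (1/2:ℝ) 1) := hgc.mono hmem
  have hdgIcc : ContinuousOn dg (Icc (1/2:ℝ) 1) := hdg.mono hmem
  have hJint : IntervalIntegrable (fun s => g s ^ 2 + dg s ^ 2) volume (1/2) 1 :=
    (((hgIcc.pow 2).add (hdgIcc.pow 2))).intervalIntegrable_of_Icc (by norm_num)
  have hJnn : 0 ≤ᵐ[volume.restrict (Ioc (1/2:ℝ) 1)] fun s => g s ^ 2 + dg s ^ 2 :=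
    Filter.Eventually.of_forall fun s => by positivity
  -- Step 1 : `g 1 ^ 2 ≤ 3 * J`
  have hg1J : g 1 ^ 2 ≤ 3 * J := by
    have step : ∀ s ∈ Icc (1/2:ℝ) 1, g 1 ^ 2 ≤ g s ^ 2 + J := by
      intro s hs
      have hsub : Icc s 1 ⊆ Icc (1/2:ℝ) 1 := Icc_subset_Icc hs.1 le_rfl
      have hder : ∀ x ∈ uIcc s 1, HasDerivAt (fun y => g y ^ 2) (2 * g x * dg x) x := by
        intro x hx
        rw [uIcc_of_le hs.2] at hx
        have : HasDerivAt (fun y => g y ^ 2) (2 * g x ^ 1 * dg x) x := (hg x (hmem x (hsub hx))).pow 2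
        simpa [pow_one, mul_comm] using this
      have hcont : IntervalIntegrable (fun x => 2 * g x * dg x) volume s 1 := by
        apply ContinuousOn.intervalIntegrable_of_Icc hs.2
        exact (continuousOn_const.mul (hgIcc.mono hsub)).mul (hdgIcc.mono hsub)
      have heq : ∫ x in s..1, 2 * g x * dg x = g 1 ^ 2 - g s ^ 2 :=
        intervalIntegral.integral_eq_sub_of_hasDerivAt hder hcont
      have hle1 : ∫ x in s..1, 2 * g x * dg x ≤ ∫ x in s..1, (g x ^ 2 + dg x ^ 2) := by
        apply intervalIntegral.integral_mono_on hs.2 hcont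
          (hJint.mono_set (by rw [uIcc_of_le hs.2, uIcc_of_le (by norm_num : (1/2:ℝ) ≤ 1)]; exact hsub))
        intro x _
        nlinarith [sq_nonneg (g x - dg x)]
      have hle2 : ∫ x in s..1, (g x ^ 2 + dg x ^ 2) ≤ J :=
        intervalIntegral.integral_mono_interval hs.1 hs.2 le_rfl hJnn hJint
      linarith
    have hint1 : IntervalIntegrable (fun _ : ℝ => g 1 ^ 2) volume (1/2) 1 :=
      intervalIntegrable_const
    have hint2 : IntervalIntegrable (fun s => g s ^ 2 + J) volume (1/2) 1 :=
      ((hgIcc.pow 2).add continuousOn_const).intervalIntegrable_of_Icc (by norm_num)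
    have hmono := intervalIntegral.integral_mono_on (by norm_num : (1/2:ℝ) ≤ 1) hint1 hint2 step
    rw [intervalIntegral.integral_const] at hmono
    have hsplit : ∫ s in (1/2:ℝ)..1, (g s ^ 2 + J) = (∫ s in (1/2:ℝ)..1, g s ^ 2) + (1/2) * J := by
      rw [intervalIntegral.integral_add (f := fun s => g s ^ 2) ((hgIcc.pow 2).intervalIntegrable_of_Icc (by norm_num))
        intervalIntegrable_const, intervalIntegral.integral_const]
      norm_num
    have hgsq : (∫ s in (1/2:ℝ)..1, g s ^ 2) ≤ J := by
      apply intervalIntegral.integral_mono_on (by norm_num : (1/2:ℝ) ≤ 1)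
        ((hgIcc.pow 2).intervalIntegrable_of_Icc (by norm_num)) hJint
      intro x _; simp only [Pi.pow_apply]; nlinarith [sq_nonneg (dg x)]
    rw [hsplit] at hmono
    have h12 : ((1:ℝ) - 1/2) • g 1 ^ 2 = (1/2) * g 1 ^2 := by norm_num
    rw [h12] at hmono
    linarith
  -- Step 2 : `J ≤ 2 ^ k * I`
  have hJI : J ≤ 2 ^ k * I := by
    have hrpow : ContinuousOn (fun s : ℝ => s ^ k) (Icc (1/2:ℝ) 1) := fun s hs =>
      (Real.continuousAt_rpow_const s k (Or.inl (ne_of_gt (hmem s hs).1))).continuousWithinAt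
    have hFcont : ContinuousOn (fun s : ℝ => 2 ^ k * (s ^ k * (g s ^ 2 + dg s ^ 2))) (Icc (1/2:ℝ) 1) :=
      continuousOn_const.mul (hrpow.mul ((hgIcc.pow 2).add (hdgIcc.pow 2)))
    have h1 : J ≤ ∫ s in (1/2 : ℝ)..1, 2 ^ k * (s ^ k * (g s ^ 2 + dg s ^ 2)) := by
      apply intervalIntegral.integral_mono_on (by norm_num : (1/2:ℝ) ≤ 1) hJint
        (hFcont.intervalIntegrable_of_Icc (by norm_num))
      intro x hx
      have hxpos : (0:ℝ) < x := (hmem x hx).1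
      have h2x : (1:ℝ) ≤ (2*x) ^ k := Real.one_le_rpow (by linarith [hx.1]) (by linarith)
      rw [Real.mul_rpow (by norm_num) hxpos.le] at h2x
      have hnn : (0:ℝ) ≤ g x ^ 2 + dg x ^ 2 := by positivity
      calc g x ^ 2 + dg x ^ 2 = 1 * (g x ^ 2 + dg x ^ 2) := (one_mul _).symm
        _ ≤ (2:ℝ) ^ k * x ^ k * (g x ^ 2 + dg x ^ 2) := mul_le_mul_of_nonneg_right h2x hnn
        _ = 2 ^ k * (x ^ k * (g x ^ 2 + dg x ^ 2)) := by ring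
    have h2 : (∫ s in (1/2 : ℝ)..1, s ^ k * (g s ^ 2 + dg s ^ 2)) ≤ I := by
      rw [intervalIntegral.integral_of_le (by norm_num : (1/2:ℝ) ≤ 1)]
      exact setIntegral_mono_set hint hnnae (Ioc_subset_Ioc (by norm_num) le_rfl).eventuallyLE
    rw [intervalIntegral.integral_const_mul] at h1
    nlinarith
  have hg1 : g 1 ^ 2 ≤ 3 * (2 ^ k * I) := by nlinarith
  -- Step 3 : the truncated Hardy inequality
  have key : ∀ ε : ℝ, ε ∈ Ioc (0:ℝ) 1 →
      ∫ s in Icc ε 1, s ^ (k-2) * g s ^ 2 ≤ C * I := by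
    intro ε hε
    have hsub : Icc ε 1 ⊆ Ioc (0:ℝ) 1 := fun s hs => ⟨lt_of_lt_of_le hε.1 hs.1, hs.2⟩
    have hgI : ContinuousOn g (Icc ε 1) := hgc.mono hsub
    have hdgI : ContinuousOn dg (Icc ε 1) := hdg.mono hsub
    have hrpow : ∀ p : ℝ, ContinuousOn (fun s : ℝ => s ^ p) (Icc ε 1) := fun p s hs =>
      (Real.continuousAt_rpow_const s p (Or.inl (ne_of_gt (hsub hs).1))).continuousWithinAt
    set f' : ℝ → ℝ := fun s => (k-1) * s^(k-2) * g s^2 + s^(k-1)*(2*g s*dg s) with hf'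
    have hder : ∀ x ∈ uIcc ε 1, HasDerivAt (fun s => s^(k-1) * g s^2) (f' x) x := by
      intro x hx
      rw [uIcc_of_le hε.2] at hx
      have hx0 : x ≠ 0 := ne_of_gt (hsub hx).1
      have h1 : HasDerivAt (fun s : ℝ => s ^ (k-1)) ((k-1) * x ^ (k-1-1)) x :=
        Real.hasDerivAt_rpow_const (Or.inl hx0)
      have h2 : HasDerivAt (fun s => g s ^ 2) (2 * g x ^ 1 * dg x) x :=
        (hg x (hsub hx)).pow 2
      have h3 : HasDerivAt (fun s => s^(k-1) * g s^2) _ x := h1.mul h2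
      have he : k - 1 - 1 = k - 2 := by ring
      rw [he] at h3
      simpa [hf', pow_one, mul_comm, mul_assoc, mul_left_comm] using h3
    have hf'cont : ContinuousOn f' (Icc ε 1) := by
      apply ContinuousOn.add
      · exact (continuousOn_const.mul (hrpow (k-2))).mul (hgI.pow 2)
      · exact (hrpow (k-1)).mul ((continuousOn_const.mul hgI).mul hdgI)
    have hf'int : IntervalIntegrable f' volume ε 1 := hf'cont.intervalIntegrable_of_Icc hε.2
    have heq : ∫ x in ε..1, f' x = g 1 ^ 2 - ε^(k-1) * g ε ^ 2 := by
      rw [intervalIntegral.integral_eq_sub_of_hasDerivAt hder hf'int]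
      rw [Real.one_rpow]; ring
    have hεnn : 0 ≤ ε ^ (k-1) * g ε ^ 2 :=
      mul_nonneg (Real.rpow_nonneg hε.1.le _) (sq_nonneg _)
    have hpt : ∀ x ∈ Icc ε 1, (k-1)/2 * (x^(k-2) * g x^2) - 2/(k-1) * (x^k * dg x^2) ≤ f' x := by
      intro x hx
      have hxpos : (0:ℝ) < x := (hsub hx).1
      set p := x ^ ((k-2)/2) with hpdef
      set q := x ^ (k/2) with hqdef
      have ep : (k-2)/2 + (k-2)/2 = k - 2 := by ring
      have eq' : k/2 + k/2 = k := by ring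
      have epq : (k-2)/2 + k/2 = k - 1 := by ring
      have hp : p * p = x ^ (k-2) := by rw [hpdef, ← Real.rpow_add hxpos, ep]
      have hq : q * q = x ^ k := by rw [hqdef, ← Real.rpow_add hxpos, eq']
      have hpq : p * q = x ^ (k-1) := by rw [hpdef, hqdef, ← Real.rpow_add hxpos, epq]
      rw [hf']
      simp only [← hp, ← hq, ← hpq]
      have hnn : 0 ≤ (k-1)/2 * (p*g x)^2 + 2/(k-1) * (q*dg x)^2 + 2*(p*g x)*(q*dg x) := by
        have expand : (k-1)/2 * (p*g x)^2 + 2/(k-1) * (q*dg x)^2 + 2*(p*g x)*(q*dg x) =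
            ((k-1)*(p*g x) + 2*(q*dg x))^2 / (2*(k-1)) := by
          field_simp
          ring
        rw [expand]; positivity
      nlinarith [hnn]
    set A : ℝ := ∫ x in ε..1, x^(k-2) * g x^2 with hA
    set B : ℝ := ∫ x in ε..1, x^k * dg x^2 with hB
    have hAint : IntervalIntegrable (fun x => x^(k-2) * g x^2) volume ε 1 :=
      ((hrpow (k-2)).mul (hgI.pow 2)).intervalIntegrable_of_Icc hε.2
    have hBint : IntervalIntegrable (fun x => x^k * dg x^2) volume ε 1 :=
      ((hrpow k).mul (hdgI.pow 2)).intervalIntegrable_of_Icc hε.2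
    have hlow : (k-1)/2 * A - 2/(k-1) * B ≤ ∫ x in ε..1, f' x := by
      rw [hA, hB, ← intervalIntegral.integral_const_mul, ← intervalIntegral.integral_const_mul,
        ← intervalIntegral.integral_sub (hAint.const_mul _) (hBint.const_mul _)]
      exact intervalIntegral.integral_mono_on hε.2
        (((hAint.const_mul _).sub (hBint.const_mul _))) hf'int hpt
    have hmain : (k-1)/2 * A ≤ g 1 ^ 2 + 2/(k-1) * B := by
      rw [heq] at hlow; linarith
    have hBI : B ≤ I := by
      have h1 : B ≤ ∫ x in ε..1, x^k * (g x^2 + dg x^2) := by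
        apply intervalIntegral.integral_mono_on hε.2 hBint
          (((hrpow k).mul ((hgI.pow 2).add (hdgI.pow 2))).intervalIntegrable_of_Icc hε.2)
        intro x hx
        have : (0:ℝ) ≤ x ^ k := Real.rpow_nonneg (hsub hx).1.le k
        simp only [Pi.mul_apply, Pi.add_apply, Pi.pow_apply]
        nlinarith [sq_nonneg (g x)]
      have h2 : (∫ x in ε..1, x^k * (g x^2 + dg x^2)) ≤ I := by
        rw [intervalIntegral.integral_of_le hε.2]
        exact setIntegral_mono_set hint hnnae (Ioc_subset_Ioc hε.1.le le_rfl).eventuallyLE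
      linarith
    have hfin : A ≤ C * I := by
      have e1 : A = 2/(k-1) * ((k-1)/2 * A) := by field_simp
      have e2 : A ≤ 2/(k-1) * (g 1 ^ 2 + 2/(k-1) * B) := by
        rw [e1]; exact mul_le_mul_of_nonneg_left hmain (by positivity)
      have e3 : 2/(k-1) * (g 1 ^ 2 + 2/(k-1) * B) =
          2/(k-1) * g 1 ^ 2 + 4/(k-1)^2 * B := by field_simp; ring
      calc A ≤ 2/(k-1) * g 1 ^ 2 + 4/(k-1)^2 * B := by rw [← e3]; exact e2
        _ ≤ 2/(k-1) * (3 * (2 ^ k * I)) + 4/(k-1)^2 * I := by gcongr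
        _ = C * I := by rw [hC]; ring
    calc ∫ s in Icc ε 1, s ^ (k-2) * g s ^ 2 = A := by
          rw [hA, intervalIntegral.integral_of_le hε.2, integral_Icc_eq_integral_Ioc]
      _ ≤ _ := hfin
  -- Step 4 : monotone convergence
  set F : ℝ → ENNReal := fun s => ENNReal.ofReal (s ^ (k-2) * g s ^ 2) with hF
  set μ := volume.restrict (Ioc (0:ℝ) 1) with hμ
  set u : ℕ → ℝ := fun n => 1/(n+1) with hu
  have humem : ∀ n : ℕ, u n ∈ Ioc (0:ℝ) 1 := by
    intro n
    constructor
    · positivity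
    · rw [hu]; rw [div_le_one (by positivity)]; simp
  have hFmeas : AEMeasurable F μ := by
    have hc1 : ContinuousOn (fun s : ℝ => s ^ (k-2)) (Ioc (0:ℝ) 1) := fun s hs =>
      (Real.continuousAt_rpow_const s (k-2) (Or.inl (ne_of_gt hs.1))).continuousWithinAt
    have : AEMeasurable (fun s : ℝ => s ^ (k-2) * g s ^ 2) μ :=
      ContinuousOn.aemeasurable (hc1.mul (hgc.pow 2)) measurableSet_Ioc
    exact this.ennreal_ofReal
  set f : ℕ → ℝ → ENNReal := fun n => (Ici (u n)).indicator F with hf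
  have hfmeas : ∀ n, AEMeasurable (f n) μ := fun n =>
    hFmeas.indicator measurableSet_Ici
  have hfmono : ∀ x, Monotone fun n => f n x := by
    intro x
    apply monotone_nat_of_le_succ
    intro n
    apply Set.indicator_le_indicator_of_subset _ (fun a => zero_le)
    apply Ici_subset_Ici.2
    rw [hu]
    apply div_le_div_of_nonneg_left (by norm_num) (by positivity)
    push_cast; linarith
  have hfsup : ∀ᵐ x ∂μ, (⨆ n, f n x) = F x := by
    filter_upwards [ae_restrict_mem measurableSet_Ioc] with x hx
    obtain ⟨n, hn⟩ := exists_nat_one_div_lt hx.1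
    apply le_antisymm
    · exact iSup_le fun m => Set.indicator_le_self' (fun a _ => zero_le) x
    · calc F x = f n x := by
            rw [hf]; exact (Set.indicator_of_mem (mem_Ici.2 (le_of_lt hn)) F).symm
        _ ≤ ⨆ m, f m x := le_iSup (fun m => f m x) n
  have hsup_eq : ∫⁻ x, F x ∂μ = ⨆ n, ∫⁻ x, f n x ∂μ := by
    rw [← lintegral_iSup' hfmeas (Filter.Eventually.of_forall hfmono)]
    refine lintegral_congr_ae ?_
    filter_upwards [hfsup] with x hx
    exact hx.symm
  have hfn_le : ∀ n, ∫⁻ x, f n x ∂μ ≤ ENNReal.ofReal (C * I) := by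
    intro n
    have hle : (0:ℝ) < u n := (humem n).1
    have hIcc : Ici (u n) ∩ Ioc (0:ℝ) 1 = Icc (u n) 1 := by
      ext x
      simp only [mem_inter_iff, mem_Ici, mem_Ioc, mem_Icc]
      constructor
      · rintro ⟨h1, _, h3⟩; exact ⟨h1, h3⟩
      · rintro ⟨h1, h2⟩; exact ⟨h1, lt_of_lt_of_le hle h1, h2⟩
    rw [hf, hμ]
    rw [lintegral_indicator measurableSet_Ici, Measure.restrict_restrict measurableSet_Ici, hIcc]
    have hsub : Icc (u n) 1 ⊆ Ioc (0:ℝ) 1 :=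
      fun s hs => ⟨lt_of_lt_of_le hle hs.1, hs.2⟩
    have hc2 : ContinuousOn (fun s : ℝ => s ^ (k-2)) (Icc (u n) 1) := fun s hs =>
      (Real.continuousAt_rpow_const s (k-2) (Or.inl (ne_of_gt (hsub hs).1))).continuousWithinAt
    have hintIcc : IntegrableOn (fun s : ℝ => s ^ (k-2) * g s ^ 2) (Icc (u n) 1) :=
      ContinuousOn.integrableOn_Icc (hc2.mul ((hgc.mono hsub).pow 2))
    have hnnIcc : 0 ≤ᵐ[volume.restrict (Icc (u n) 1)] fun s : ℝ => s ^ (k-2) * g s ^ 2 := by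
      filter_upwards [ae_restrict_mem measurableSet_Icc] with s hs
      exact mul_nonneg (Real.rpow_nonneg (hsub hs).1.le _) (sq_nonneg _)
    rw [hF, ← ofReal_integral_eq_lintegral_ofReal hintIcc hnnIcc]
    exact ENNReal.ofReal_le_ofReal (key (u n) (humem n))
  rw [hRHS, ← ENNReal.ofReal_mul hCpos.le]
  calc ∫⁻ s in Ioc (0:ℝ) 1, F s = ⨆ n, ∫⁻ x, f n x ∂μ := hsup_eq
    _ ≤ ENNReal.ofReal (C * I) := iSup_le hfn_le
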